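/- arXiv:2604.17057 — 2 statements merged into one kernel-verified Lean document; each statement's English description precedes it below -/
import Mathlib

section
/- Under the rotated designation scheme at coalition size s, for every agent x ∈ {1, …, n}, the number of coalitions of size s assigned to agent x satisfies ⌊C(n,s)/n⌋ ≤ |CV_x^s| ≤ ⌈C(n,s)/n⌉, where |CV_x^s| = |A(n,s)| + |{ j : (x − 1 − h_j) mod n < d_j }|. In particular, the maximum difference in per-size allocation between any two agents is at most 1. -/
namespace NDCA

/-- `t` is an increment array (IA) of size `s` for `n` agents:
a tuple of non-negative integers of length `s` with sum `n - s`. -/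
def IsIA (n s : ℕ) (t : List ℕ) : Prop :=
  t.length = s ∧ t.sum = n - s

/-- Cumulative increment `φ_i` (1-indexed): `φ_1 = 0`, and
`φ_i = Σ_{k=0}^{i-2} (t_k + 1)` for `2 ≤ i`. -/
def phi (t : List ℕ) (i : ℕ) : ℕ := (t.take (i - 1)).sum + (i - 1)

/-- The coalition generated by increment array `t` from starting agent `x`:
`C(x,t) = { ((x - 1 + φ_i) mod n) + 1 : 1 ≤ i ≤ s }`. -/
def coal (n x : ℕ) (t : List ℕ) : Finset ℕ :=
  (Finset.Icc 1 t.length).image (fun i => (x - 1 + phi t i) % n + 1)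

/-- The collection of coalitions generated by `t` as the starting agent
ranges over `{1, …, n}`. -/
def gen (n : ℕ) (t : List ℕ) : Finset (Finset ℕ) :=
  (Finset.Icc 1 n).image (fun x => coal n x t)

/-- `u` is a circular shift of `t`: `u = ⟨t_k, …, t_{s-1}, t_0, …, t_{k-1}⟩`
for some `0 ≤ k ≤ s - 1`. -/
def ShiftEquiv (t u : List ℕ) : Prop :=
  ∃ k, k < t.length ∧ u = t.rotate k

/-- `p` is a period of `t`: `1 ≤ p`, `p ∣ |t|`, and `t` consists of
`|t|/p` identical copies of its first `p` entries. -/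
def IsPeriodOf (t : List ℕ) (p : ℕ) : Prop :=
  1 ≤ p ∧ p ∣ t.length ∧ t = (List.replicate (t.length / p) (t.take p)).flatten

/-- The period `π(t)`: the smallest `p` that is a period of `t`. -/
noncomputable def period (t : List ℕ) : ℕ := sInf {p | IsPeriodOf t p}

/-- The stride `ϖ(t) = n·π(t)/s` of an increment array of size `s`. -/
noncomputable def stride (n s : ℕ) (t : List ℕ) : ℕ := n * period t / s

/-- Cumulative offset `h_j = Σ_{i<j} d_i` over the periodic canonical IAs
enumerated (0-indexed) by the list `L`. -/
noncomputable def offsetAt (n s : ℕ) (L : List (List ℕ)) (j : ℕ) : ℕ :=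
  ∑ i ∈ Finset.range j, stride n s (L.getD i [])

/-- The number of periodic canonical IAs (enumerated by `L`) for which agent
`x` passes the rotated designation test `(x - 1 - h_j) mod n < d_j`. -/
noncomputable def desigCount (n s : ℕ) (L : List (List ℕ)) (x : ℕ) : ℕ :=
  ((Finset.range L.length).filter (fun j =>
    ((x : ℤ) - 1 - (offsetAt n s L j : ℤ)) % (n : ℤ)
      < (stride n s (L.getD j []) : ℤ))).card

/- Auxiliary lemmas -/


/-- Finset of lists of length `d` with sum `m`. -/
def LS : ℕ → ℕ → Finset (List ℕ)
  | 0, m => if m = 0 then {([] : List ℕ)} else ∅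
  | (d+1), m => (Finset.HasAntidiagonal.antidiagonal m).biUnion
      fun ab => (LS d ab.2).image (fun l => ab.1 :: l)

lemma mem_LS : ∀ (d m : ℕ) (l : List ℕ), l ∈ LS d m ↔ l.length = d ∧ l.sum = m := by
  intro d
  induction d with
  | zero =>
    intro m l
    simp only [LS]
    split
    · next h => subst h; simp [List.length_eq_zero_iff]; aesop
    · simp only [Finset.notMem_empty, false_iff]
      rintro ⟨h1, h2⟩
      rw [List.length_eq_zero_iff] at h1
      subst h1; simp at h2; omega
  | succ d ih =>
    intro m l
    simp only [LS, Finset.mem_biUnion, Finset.mem_image, Finset.HasAntidiagonal.mem_antidiagonal, Prod.exists]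
    constructor
    · rintro ⟨a, b, hab, t, ht, rfl⟩
      obtain ⟨h1, h2⟩ := (ih b t).mp ht
      simp [h1, h2, ← hab]
    · rintro ⟨h1, h2⟩
      cases l with
      | nil => simp at h1
      | cons a t =>
        refine ⟨a, t.sum, ?_, t, (ih _ t).mpr ⟨by simpa using h1, rfl⟩, rfl⟩
        simpa using h2

lemma LS_disj (d m : ℕ) : ∀ ab ∈ Finset.HasAntidiagonal.antidiagonal m, ∀ cd ∈ Finset.HasAntidiagonal.antidiagonal m, ab ≠ cd →
    Disjoint ((LS d ab.2).image (fun l => ab.1 :: l)) ((LS d cd.2).image (fun l => cd.1 :: l)) := by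
  intro ab hab cd hcd hne
  simp only [Finset.disjoint_left, Finset.mem_image]
  rintro l ⟨t, ht, rfl⟩ ⟨u, hu, huv⟩
  apply hne
  injection huv with e1 e2
  have hab' := Finset.HasAntidiagonal.mem_antidiagonal.mp hab
  have hcd' := Finset.HasAntidiagonal.mem_antidiagonal.mp hcd
  have : ab.1 = cd.1 := e1.symm
  ext <;> omega

lemma card_LS : ∀ (d m : ℕ), (LS (d+1) m).card = (m + d).choose d := by
  intro d
  induction d with
  | zero =>
    intro m
    have : LS 1 m = {[m]} := by
      ext l
      rw [mem_LS]
      constructor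
      · rintro ⟨h1, h2⟩
        cases l with
        | nil => simp at h1
        | cons a t =>
          have : t = [] := by simpa [List.length_eq_zero_iff] using h1
          subst this
          simp_all
      · rintro h; simp at h; subst h; simp
    simp [this]
  | succ d ih =>
    intro m
    rw [show LS (d+2) m = (Finset.HasAntidiagonal.antidiagonal m).biUnion
      (fun ab => (LS (d+1) ab.2).image (fun l => ab.1 :: l)) from rfl,
      Finset.card_biUnion (LS_disj (d+1) m)]
    have hstep : ∀ ab ∈ Finset.HasAntidiagonal.antidiagonal m,
        ((LS (d+1) ab.2).image (fun l => ab.1 :: l)).card = (ab.2 + d).choose d := by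
      intro ab _
      rw [Finset.card_image_of_injective _ (fun x y h => by simpa using h), ih]
    rw [Finset.sum_congr rfl hstep]
    rw [Finset.Nat.sum_antidiagonal_eq_sum_range_succ_mk]
    have hrefl := Finset.sum_range_reflect (fun k => (k + d).choose d) (m+1)
    simp only [Nat.add_sub_cancel] at hrefl
    have h2 : (∑ k ∈ Finset.range (m+1), (k + d).choose d)
        = ∑ j ∈ Finset.Icc d (m + d), j.choose d := by
      rw [show Finset.Icc d (m+d) = Finset.Ico d (m+d+1) by rw [Finset.Ico_add_one_right_eq_Icc],
        Finset.sum_Ico_eq_sum_range, show m + d + 1 - d = m + 1 by omega]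
      exact Finset.sum_congr rfl fun k _ => by rw [add_comm]
    have h3 : (∑ k ∈ Finset.range (m+1), ((m - k) + d).choose d)
        = (m + d + 1).choose (d + 1) := by
      rw [hrefl, h2, Nat.sum_Icc_choose]
    rw [show m + (d+1) = m + d + 1 by omega]
    exact h3



lemma isPeriodOf_length {t : List ℕ} (h : t ≠ []) : IsPeriodOf t t.length := by
  have hl : 0 < t.length := List.length_pos_iff.mpr h
  refine ⟨hl, dvd_rfl, ?_⟩
  rw [Nat.div_self hl]
  simp

lemma rotate_of_isPeriodOf {t : List ℕ} {p : ℕ} (hp : IsPeriodOf t p) : t.rotate p = t := by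
  obtain ⟨hp1, hpd, heq⟩ := hp
  set b := t.take p with hb
  rcases Nat.eq_zero_or_pos (t.length / p) with hm0 | hm0
  · have : t = [] := by rw [heq, hm0]; simp
    simp [this]
  · obtain ⟨m', hm'⟩ : ∃ m', t.length / p = m' + 1 := ⟨t.length / p - 1, by omega⟩
    have hple : p ≤ t.length := by
      by_contra h
      push_neg at h
      have := Nat.div_eq_of_lt h
      omega
    have hlenb : b.length = p := by rw [hb, List.length_take]; omega
    have heq' : t = (List.replicate (m' + 1) b).flatten := by rw [heq, hm']
    have hsplit : t = b ++ (List.replicate m' b).flatten := by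
      conv_lhs => rw [heq', List.replicate_succ, List.flatten_cons]
    rw [List.rotate_eq_drop_append_take hple]
    have hdrop : t.drop p = (List.replicate m' b).flatten := by
      conv_lhs => rw [hsplit]
      rw [List.drop_append_of_le_length (le_of_eq hlenb.symm)]
      simp [hlenb]
    rw [hdrop, ← hb]
    calc (List.replicate m' b).flatten ++ b
        = (List.replicate (m' + 1) b).flatten := by
          rw [List.replicate_succ' (n := m') (a := b), List.flatten_append, List.flatten_cons,
            List.flatten_nil, List.append_nil]
      _ = t := heq'.symm

lemma flatten_of_rotate {g : ℕ} (hg : 0 < g) :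
    ∀ (m : ℕ) (t : List ℕ), t.length = m * g → t.rotate g = t →
      t = (List.replicate m (t.take g)).flatten := by
  intro m
  induction m with
  | zero =>
    intro t hlen _
    have : t = [] := List.length_eq_zero_iff.mp (by omega)
    simp [this]
  | succ m ih =>
    intro t hlen hrot
    have hgle : g ≤ t.length := by
      rw [hlen]; exact Nat.le_mul_of_pos_left g (Nat.succ_pos m)
    set b := t.take g with hb
    set c := t.drop g with hc
    have hlenb : b.length = g := by rw [hb, List.length_take]; omega
    have hlenc : c.length = m * g := by
      rw [hc, List.length_drop, hlen]
      have : (m + 1) * g = m * g + g := by ring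
      omega
    have hbc : b ++ c = t := List.take_append_drop g t
    have hcb : c ++ b = t := by
      rw [hc, hb, ← List.rotate_eq_drop_append_take hgle]; exact hrot
    rcases Nat.eq_zero_or_pos m with hm0 | hm0
    · rw [hm0] at hlenc
      simp only [Nat.zero_mul] at hlenc
      have hcnil : c = [] := List.length_eq_zero_iff.mp hlenc
      rw [hm0]
      simp only [List.replicate_succ, List.replicate_zero, List.flatten_cons,
        List.flatten_nil, List.append_nil]
      rw [← hbc, hcnil, List.append_nil, hb]
    · have hgc : g ≤ c.length := by rw [hlenc]; exact Nat.le_mul_of_pos_left g hm0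
      have htakec : c.take g = b := by
        have h2 : (c ++ b).take g = c.take g := List.take_append_of_le_length hgc
        rw [hcb] at h2
        rw [← h2, ← hb]
      have hdropc : c.drop g ++ c.take g = c := by
        have h1 : (c ++ b).drop g = c.drop g ++ b := List.drop_append_of_le_length hgc
        rw [hcb] at h1
        have h2 : t.drop g = c := hc.symm
        rw [htakec, ← h1, h2]
      have hrotc : c.rotate g = c := by
        rw [List.rotate_eq_drop_append_take hgc]; exact hdropc
      have hrec := ih c hlenc hrotc
      rw [htakec] at hrec
      calc t = b ++ c := hbc.symm
      _ = b ++ (List.replicate m b).flatten := by rw [← hrec]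
      _ = (List.replicate (m+1) b).flatten := by rw [List.replicate_succ, List.flatten_cons]

lemma isPeriodOf_of_rotate {t : List ℕ} {g : ℕ} (hg1 : 1 ≤ g) (hgd : g ∣ t.length)
    (hrot : t.rotate g = t) : IsPeriodOf t g := by
  refine ⟨hg1, hgd, ?_⟩
  exact flatten_of_rotate hg1 (t.length / g) t (by rw [Nat.div_mul_cancel hgd]) hrot

lemma isPeriodOf_period {t : List ℕ} (h : t ≠ []) : IsPeriodOf t (period t) :=
  Nat.sInf_mem (s := {p | IsPeriodOf t p}) ⟨t.length, isPeriodOf_length h⟩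

lemma period_le {t : List ℕ} {p : ℕ} (hp : IsPeriodOf t p) : period t ≤ p :=
  Nat.sInf_le (s := {p | IsPeriodOf t p}) hp

lemma period_pos {t : List ℕ} (h : t ≠ []) : 0 < period t :=
  (isPeriodOf_period h).1

lemma period_dvd_length {t : List ℕ} (h : t ≠ []) : period t ∣ t.length :=
  (isPeriodOf_period h).2.1

lemma rotate_period {t : List ℕ} (h : t ≠ []) : t.rotate (period t) = t :=
  rotate_of_isPeriodOf (isPeriodOf_period h)

lemma rotate_mul_self {t : List ℕ} {g : ℕ} (h : t.rotate g = t) (j : ℕ) :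
    t.rotate (g * j) = t := by
  induction j with
  | zero => simp
  | succ j ih =>
    have : g * (j + 1) = g * j + g := by ring
    rw [this, ← List.rotate_rotate, ih, h]

lemma rotate_mod_self {t : List ℕ} {g k : ℕ} (hg : t.rotate g = t) (hk : t.rotate k = t) :
    t.rotate (k % g) = t := by
  have h1 : t.rotate (g * (k / g) + k % g) = t := by
    rw [Nat.div_add_mod] at *; exact hk
  rw [← List.rotate_rotate, rotate_mul_self hg] at h1
  exact h1

lemma period_dvd_of_rotate {t : List ℕ} (h : t ≠ []) {k : ℕ} (hk : t.rotate k = t) :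
    period t ∣ k := by
  set S : Set ℕ := {j | 0 < j ∧ t.rotate j = t} with hS
  have hlen : 0 < t.length := List.length_pos_iff.mpr h
  have hlenS : t.length ∈ S := ⟨hlen, List.rotate_length t⟩
  set g := sInf S with hg
  have hgS : g ∈ S := Nat.sInf_mem ⟨_, hlenS⟩
  have hdvd : ∀ j ∈ S, g ∣ j := by
    intro j hj
    have hmod : t.rotate (j % g) = t := rotate_mod_self hgS.2 hj.2
    rcases Nat.eq_zero_or_pos (j % g) with h0 | h0
    · exact Nat.dvd_of_mod_eq_zero h0
    · have : j % g ∈ S := ⟨h0, hmod⟩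
      have := Nat.sInf_le this
      have := Nat.mod_lt j hgS.1
      omega
  have hgdlen : g ∣ t.length := hdvd _ hlenS
  have hper : IsPeriodOf t g := isPeriodOf_of_rotate hgS.1 hgdlen hgS.2
  have h1 : period t ≤ g := period_le hper
  have h2 : g ≤ period t := Nat.sInf_le ⟨period_pos h, rotate_period h⟩
  have hpg : period t = g := le_antisymm h1 h2
  rcases Nat.eq_zero_or_pos k with hk0 | hk0
  · simp [hk0]
  · rw [hpg]; exact hdvd k ⟨hk0, hk⟩

lemma rotate_fix_rotate {t : List ℕ} (a k : ℕ) :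
    (t.rotate a).rotate k = t.rotate a ↔ t.rotate k = t := by
  constructor
  · intro h
    have h1 : (t.rotate k).rotate a = t.rotate a := by
      rw [List.rotate_rotate, add_comm, ← List.rotate_rotate]; exact h
    exact List.rotate_eq_rotate.mp h1
  · intro h
    rw [List.rotate_rotate, add_comm, ← List.rotate_rotate, h]

lemma rotate_eq_rotate_iff_aux {t : List ℕ} (h : t ≠ []) {a b : ℕ} (hab : a ≤ b) :
    t.rotate a = t.rotate b ↔ period t ∣ (b - a) := by
  constructor
  · intro heq
    have h1 : (t.rotate a).rotate (b - a) = t.rotate a := by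
      rw [List.rotate_rotate, show a + (b - a) = b by omega]; exact heq.symm
    exact period_dvd_of_rotate h ((rotate_fix_rotate a (b - a)).mp h1)
  · intro hdvd
    obtain ⟨j, hj⟩ := hdvd
    have h1 : t.rotate (b - a) = t := by rw [hj]; exact rotate_mul_self (rotate_period h) j
    have h2 : (t.rotate (b - a)).rotate a = t.rotate b := by
      rw [List.rotate_rotate]
      congr 1
      omega
    rw [← h2, h1]

lemma rotate_eq_rotate_iff {t : List ℕ} (h : t ≠ []) (a b : ℕ) :
    t.rotate a = t.rotate b ↔ a % period t = b % period t := by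
  have hp : 0 < period t := period_pos h
  rcases le_total a b with hab | hab
  · rw [rotate_eq_rotate_iff_aux h hab]
    exact ⟨fun hd => (Nat.modEq_iff_dvd' hab).mpr hd, fun he => (Nat.modEq_iff_dvd' hab).mp he⟩
  · rw [show (t.rotate a = t.rotate b) ↔ (t.rotate b = t.rotate a) from eq_comm,
      rotate_eq_rotate_iff_aux h hab]
    exact ⟨fun hd => ((Nat.modEq_iff_dvd' hab).mpr hd).symm,
      fun he => (Nat.modEq_iff_dvd' hab).mp he.symm⟩

/-- The orbit of a list under rotations, as a Finset. -/
def orb (t : List ℕ) : Finset (List ℕ) := (Finset.range t.length).image (t.rotate ·)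

lemma card_orb {t : List ℕ} (h : t ≠ []) : (orb t).card = period t := by
  have hp : 0 < period t := period_pos h
  have hple : period t ≤ t.length :=
    Nat.le_of_dvd (List.length_pos_iff.mpr h) (period_dvd_length h)
  have himg : orb t = (Finset.range (period t)).image (t.rotate ·) := by
    apply le_antisymm
    · intro u hu
      simp only [orb, Finset.mem_image, Finset.mem_range] at hu ⊢
      obtain ⟨k, hk, rfl⟩ := hu
      refine ⟨k % period t, Nat.mod_lt _ hp, ?_⟩
      rw [rotate_eq_rotate_iff h]
      simp
    · exact Finset.image_subset_image (Finset.range_subset_range.mpr hple)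
  rw [himg, Finset.card_image_of_injOn, Finset.card_range]
  intro a ha b hb hab
  simp only [Finset.mem_coe, Finset.mem_range] at ha hb
  have := (rotate_eq_rotate_iff h a b).mp hab
  rwa [Nat.mod_eq_of_lt ha, Nat.mod_eq_of_lt hb] at this


lemma mem_orb {t u : List ℕ} : u ∈ orb t ↔ ShiftEquiv t u := by
  simp only [orb, Finset.mem_image, Finset.mem_range, ShiftEquiv]
  exact ⟨fun ⟨k, hk, he⟩ => ⟨k, hk, he.symm⟩, fun ⟨k, hk, he⟩ => ⟨k, hk, he.symm⟩⟩

lemma shiftEquiv_of_rotate {t : List ℕ} (h : t ≠ []) (k : ℕ) :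
    ShiftEquiv t (t.rotate k) := by
  refine ⟨k % t.length, Nat.mod_lt _ (List.length_pos_iff.mpr h), ?_⟩
  rw [List.rotate_mod]

lemma shiftEquiv_symm {t u : List ℕ} (h : t ≠ []) (he : ShiftEquiv t u) :
    ShiftEquiv u t := by
  obtain ⟨k, hk, rfl⟩ := he
  have hu : t.rotate k ≠ [] := by simp [h]
  have : (t.rotate k).rotate (t.length - k) = t := by
    rw [List.rotate_rotate, show k + (t.length - k) = t.length by omega, List.rotate_length]
  have h2 : ShiftEquiv (t.rotate k) ((t.rotate k).rotate (t.length - k)) :=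
    shiftEquiv_of_rotate hu _
  rwa [this] at h2

lemma shiftEquiv_trans {t u v : List ℕ} (h : t ≠ []) (h1 : ShiftEquiv t u)
    (h2 : ShiftEquiv u v) : ShiftEquiv t v := by
  obtain ⟨k, hk, rfl⟩ := h1
  obtain ⟨j, hj, rfl⟩ := h2
  rw [List.rotate_rotate]
  exact shiftEquiv_of_rotate h _

/-- The full IA finset is partitioned into orbits of the representatives. -/
lemma T_eq_biUnion (n s : ℕ) (hs1 : 1 ≤ s) (R : Finset (List ℕ))
    (hIA : ∀ t ∈ R, IsIA n s t)
    (hcomplete : ∀ u, IsIA n s u → ∃ t ∈ R, ShiftEquiv t u) :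
    LS s (n - s) = R.biUnion orb := by
  ext u
  rw [mem_LS, Finset.mem_biUnion]
  constructor
  · intro hu
    obtain ⟨t, htR, hte⟩ := hcomplete u ⟨hu.1, hu.2⟩
    exact ⟨t, htR, mem_orb.mpr hte⟩
  · rintro ⟨t, htR, hu⟩
    obtain ⟨k, hk, rfl⟩ := mem_orb.mp hu
    obtain ⟨hl, hsum⟩ := hIA t htR
    exact ⟨by rw [List.length_rotate]; exact hl,
      by rw [(List.rotate_perm t k).sum_eq]; exact hsum⟩

lemma orb_disjoint (n s : ℕ) (hs1 : 1 ≤ s) (R : Finset (List ℕ))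
    (hIA : ∀ t ∈ R, IsIA n s t)
    (hdistinct : ∀ t ∈ R, ∀ u ∈ R, ShiftEquiv t u → t = u) :
    ∀ t ∈ R, ∀ t' ∈ R, t ≠ t' → Disjoint (orb t) (orb t') := by
  intro t ht t' ht' hne
  rw [Finset.disjoint_left]
  intro u hu hu'
  apply hne
  have htne : t ≠ [] := by
    intro h; have := (hIA t ht).1; rw [h] at this; simp at this; omega
  have htne' : t' ≠ [] := by
    intro h; have := (hIA t' ht').1; rw [h] at this; simp at this; omega
  exact hdistinct t ht t' ht'
    (shiftEquiv_trans htne (mem_orb.mp hu) (shiftEquiv_symm htne' (mem_orb.mp hu')))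

lemma ne_nil_of_mem {n s : ℕ} (hs1 : 1 ≤ s) {R : Finset (List ℕ)}
    (hIA : ∀ t ∈ R, IsIA n s t) {t : List ℕ} (ht : t ∈ R) : t ≠ [] := by
  intro h; have := (hIA t ht).1; rw [h] at this; simp at this; omega

lemma sum_period (n s : ℕ) (hn : 1 ≤ n) (hs1 : 1 ≤ s) (hsn : s ≤ n)
    (R : Finset (List ℕ))
    (hIA : ∀ t ∈ R, IsIA n s t)
    (hdistinct : ∀ t ∈ R, ∀ u ∈ R, ShiftEquiv t u → t = u)
    (hcomplete : ∀ u, IsIA n s u → ∃ t ∈ R, ShiftEquiv t u) :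
    ∑ t ∈ R, period t = (n - 1).choose (s - 1) := by
  have h1 : (LS s (n - s)).card = ((n - s) + (s - 1)).choose (s - 1) := by
    obtain ⟨s', rfl⟩ : ∃ s', s = s' + 1 := ⟨s - 1, by omega⟩
    rw [card_LS]
    congr 1 <;> omega
  rw [T_eq_biUnion n s hs1 R hIA hcomplete,
    Finset.card_biUnion (orb_disjoint n s hs1 R hIA hdistinct)] at h1
  have h2 : ∀ t ∈ R, (orb t).card = period t := fun t ht =>
    card_orb (ne_nil_of_mem hs1 hIA ht)
  rw [Finset.sum_congr rfl h2] at h1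
  rw [h1]
  congr 1
  omega

lemma stride_mul {n s : ℕ} (hs1 : 1 ≤ s) (hsn : s ≤ n) {t : List ℕ}
    (hIA : IsIA n s t) : s * stride n s t = n * period t := by
  obtain ⟨hlen, hsum⟩ := hIA
  have htne : t ≠ [] := by intro h; rw [h] at hlen; simp at hlen; omega
  obtain ⟨hp1, hpd, heq⟩ := isPeriodOf_period htne
  set p := period t with hpdef
  set b := t.take p with hb
  have hps : p ∣ s := by rwa [hlen] at hpd
  have hsumflat : t.sum = (s / p) * b.sum := by
    conv_lhs => rw [heq]
    rw [List.sum_flatten, List.map_replicate, List.sum_replicate, hlen]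
    simp [smul_eq_mul]
  have hkey : n * p = s * (p + b.sum) := by
    have h1 : p * (s / p) = s := Nat.mul_div_cancel' hps
    have h2 : s * b.sum = p * (s / p) * b.sum := by rw [h1]
    calc n * p = (s + (n - s)) * p := by congr 1; omega
    _ = s * p + (n - s) * p := by ring
    _ = s * p + t.sum * p := by rw [hsum]
    _ = s * p + (s / p) * b.sum * p := by rw [hsumflat]
    _ = s * p + p * (s / p) * b.sum := by ring
    _ = s * p + s * b.sum := by rw [h1]
    _ = s * (p + b.sum) := by ring
  rw [stride, hkey, Nat.mul_div_cancel_left _ (by omega : 0 < s)]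

lemma stride_le {n s : ℕ} (hs1 : 1 ≤ s) (hsn : s ≤ n) {t : List ℕ}
    (hIA : IsIA n s t) : stride n s t ≤ n := by
  have hlen := hIA.1
  have htne : t ≠ [] := by intro h; rw [h] at hlen; simp at hlen; omega
  have hps : period t ≤ s := by
    have := period_dvd_length htne
    rw [hlen] at this
    exact Nat.le_of_dvd (by omega) this
  have := stride_mul hs1 hsn hIA
  nlinarith [Nat.mul_le_mul_left n hps]

lemma choose_eq_sum_stride (n s : ℕ) (hn : 1 ≤ n) (hs1 : 1 ≤ s) (hsn : s ≤ n)
    (R : Finset (List ℕ))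
    (hIA : ∀ t ∈ R, IsIA n s t)
    (hdistinct : ∀ t ∈ R, ∀ u ∈ R, ShiftEquiv t u → t = u)
    (hcomplete : ∀ u, IsIA n s u → ∃ t ∈ R, ShiftEquiv t u) :
    n.choose s = ∑ t ∈ R, stride n s t := by
  apply Nat.eq_of_mul_eq_mul_left (show 0 < s by omega)
  rw [Finset.mul_sum]
  have h1 : ∀ t ∈ R, s * stride n s t = n * period t :=
    fun t ht => stride_mul hs1 hsn (hIA t ht)
  rw [Finset.sum_congr rfl h1, ← Finset.mul_sum,
    sum_period n s hn hs1 hsn R hIA hdistinct hcomplete]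
  have h2 := Nat.add_one_mul_choose_eq (n - 1) (s - 1)
  rw [show n - 1 + 1 = n by omega, show s - 1 + 1 = s by omega] at h2
  rw [h2]
  ring

lemma exists_window (F : ℕ → ℕ) (h0 : F 0 = 0) :
    ∀ (K v : ℕ), v < F K → ∃ j, j < K ∧ F j ≤ v ∧ v < F (j+1) := by
  intro K
  induction K with
  | zero => intro v hv; omega
  | succ K ih =>
    intro v hv
    by_cases h : v < F K
    · obtain ⟨j, h1, h2, h3⟩ := ih v h
      exact ⟨j, by omega, h2, h3⟩
    · exact ⟨K, by omega, by omega, hv⟩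

lemma window_unique {F : ℕ → ℕ} (mono : Monotone F) {v j j' : ℕ}
    (h1 : F j ≤ v) (h2 : v < F (j+1)) (h3 : F j' ≤ v) (h4 : v < F (j'+1)) : j = j' := by
  rcases lt_trichotomy j j' with h | h | h
  · have := mono (show j + 1 ≤ j' by omega); omega
  · exact h
  · have := mono (show j' + 1 ≤ j by omega); omega

lemma card_S2 {n : ℕ} (hn : 0 < n) (H r : ℕ) (hr : r < n) :
    ((Finset.range H).filter (fun m => r + n * m < H)).card = (H + n - 1 - r) / n := by
  have hset : (Finset.range H).filter (fun m => r + n * m < H)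
      = Finset.range ((H + n - 1 - r) / n) := by
    ext m
    simp only [Finset.mem_filter, Finset.mem_range]
    have key : m + 1 ≤ (H + n - 1 - r) / n ↔ (m + 1) * n ≤ H + n - 1 - r :=
      Nat.le_div_iff_mul_le hn
    have hmul : (m + 1) * n = n * m + n := by ring
    have hle : m ≤ n * m := Nat.le_mul_of_pos_left m hn
    rw [show (m < (H + n - 1 - r) / n) ↔ (m + 1 ≤ (H + n - 1 - r) / n) from Iff.rfl, key, hmul]
    omega
  rw [hset, Finset.card_range]

lemma desig_card_gen {n : ℕ} (hn : 0 < n) (d : ℕ → ℕ) (K : ℕ)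
    (hd : ∀ j, j < K → d j ≤ n) (r : ℕ) (hr : r < n) :
    ((Finset.range K).filter (fun j =>
      ((r : ℤ) - ((∑ i ∈ Finset.range j, d i : ℕ) : ℤ)) % (n : ℤ) < (d j : ℤ))).card
    = ((∑ i ∈ Finset.range K, d i) + n - 1 - r) / n := by
  set F : ℕ → ℕ := fun j => ∑ i ∈ Finset.range j, d i with hF
  have hmono : Monotone F := fun a b hab =>
    Finset.sum_le_sum_of_subset (Finset.range_subset_range.mpr hab)
  have hF0 : F 0 = 0 := by simp [hF]
  have hFsucc : ∀ j, F (j + 1) = F j + d j := fun j => Finset.sum_range_succ d j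
  set H := F K with hH
  rw [← card_S2 hn H r hr]
  -- bijection
  apply Finset.card_bij (fun j _ => (F j + (((r : ℤ) - (F j : ℤ)) % (n : ℤ)).toNat - r) / n)
  · -- maps into S2
    intro j hj
    simp only [Finset.mem_filter, Finset.mem_range] at hj
    obtain ⟨hjK, hcond⟩ := hj
    set ej : ℤ := ((r : ℤ) - (F j : ℤ)) % (n : ℤ) with hej
    have hej0 : 0 ≤ ej := Int.emod_nonneg _ (by positivity)
    have hejn : ej < n := Int.emod_lt_of_pos _ (by exact_mod_cast hn)
    set e : ℕ := ej.toNat with he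
    have hee : (e : ℤ) = ej := Int.toNat_of_nonneg hej0
    set v : ℕ := F j + e with hv
    have hdvd : (n : ℤ) ∣ (v : ℤ) - r := by
      have h1 : (n : ℤ) ∣ ((r : ℤ) - F j) - ej := Int.dvd_self_sub_of_emod_eq rfl
      have h2 : (v : ℤ) - r = -(((r : ℤ) - F j) - ej) := by
        push_cast [hv]; ring_nf; rw [hee]; ring
      rw [h2]
      exact dvd_neg.mpr h1
    have hrv : r ≤ v := by
      by_contra hcon
      push_neg at hcon
      have h1 : (0 : ℤ) < r - v := by
        have : (v : ℤ) < r := by exact_mod_cast hcon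
        omega
      have h2 : (r : ℤ) - v < n := by
        have : (0 : ℤ) ≤ v := by positivity
        have : (r : ℤ) < n := by exact_mod_cast hr
        omega
      have h3 : (n : ℤ) ∣ (r : ℤ) - v := by
        rw [show (r : ℤ) - v = -((v : ℤ) - r) by ring]; exact dvd_neg.mpr hdvd
      have := Int.le_of_dvd h1 h3
      omega
    have hdvdn : n ∣ v - r := by
      have hc : ((v - r : ℕ) : ℤ) = (v : ℤ) - r := by push_cast [hrv]; ring
      exact_mod_cast (hc ▸ hdvd : (n : ℤ) ∣ ((v - r : ℕ) : ℤ))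
    have heq : r + n * ((v - r) / n) = v := by
      have := Nat.mul_div_cancel' hdvdn
      omega
    have hecond : e < d j := by
      have : ej < (d j : ℤ) := hcond
      omega
    have hvlt : v < H := by
      have h1 : v < F (j + 1) := by rw [hFsucc]; omega
      have h2 : F (j + 1) ≤ F K := hmono (by omega)
      omega
    simp only [Finset.mem_filter, Finset.mem_range]
    constructor
    · have : (v - r) / n ≤ v - r := Nat.div_le_self _ _
      omega
    · rw [heq]; exact hvlt
  · -- injective
    intro j hj j' hj' heqm
    simp only [Finset.mem_filter, Finset.mem_range] at hj hj'
    obtain ⟨hjK, hcond⟩ := hj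
    obtain ⟨hjK', hcond'⟩ := hj'
    -- Let vj and vj' be the windows values; show equal then windows unique
    set ej : ℤ := ((r : ℤ) - (F j : ℤ)) % (n : ℤ) with hej
    set ej' : ℤ := ((r : ℤ) - (F j' : ℤ)) % (n : ℤ) with hej'
    have hej0 : 0 ≤ ej := Int.emod_nonneg _ (by positivity)
    have hej0' : 0 ≤ ej' := Int.emod_nonneg _ (by positivity)
    set v : ℕ := F j + ej.toNat with hv
    set v' : ℕ := F j' + ej'.toNat with hv'
    -- as in the previous step, r ≤ v and n ∣ v - r
    have hdvd : (n : ℤ) ∣ (v : ℤ) - r := by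
      have h1 : (n : ℤ) ∣ ((r : ℤ) - F j) - ej := Int.dvd_self_sub_of_emod_eq rfl
      have h2 : (v : ℤ) - r = -(((r : ℤ) - F j) - ej) := by
        push_cast [hv]; rw [Int.toNat_of_nonneg hej0]; ring
      rw [h2]; exact dvd_neg.mpr h1
    have hdvd' : (n : ℤ) ∣ (v' : ℤ) - r := by
      have h1 : (n : ℤ) ∣ ((r : ℤ) - F j') - ej' := Int.dvd_self_sub_of_emod_eq rfl
      have h2 : (v' : ℤ) - r = -(((r : ℤ) - F j') - ej') := by
        push_cast [hv']; rw [Int.toNat_of_nonneg hej0']; ring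
      rw [h2]; exact dvd_neg.mpr h1
    have hrv : r ≤ v := by
      by_contra hcon
      push_neg at hcon
      have h1 : (0 : ℤ) < r - v := by
        have : (v : ℤ) < r := by exact_mod_cast hcon
        omega
      have h2 : (r : ℤ) - v < n := by
        have : (0 : ℤ) ≤ v := by positivity
        have : (r : ℤ) < n := by exact_mod_cast hr
        omega
      have h3 : (n : ℤ) ∣ (r : ℤ) - v := by
        rw [show (r : ℤ) - v = -((v : ℤ) - r) by ring]; exact dvd_neg.mpr hdvd
      have := Int.le_of_dvd h1 h3
      omega
    have hrv' : r ≤ v' := by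
      by_contra hcon
      push_neg at hcon
      have h1 : (0 : ℤ) < r - v' := by
        have : (v' : ℤ) < r := by exact_mod_cast hcon
        omega
      have h2 : (r : ℤ) - v' < n := by
        have : (0 : ℤ) ≤ v' := by positivity
        have : (r : ℤ) < n := by exact_mod_cast hr
        omega
      have h3 : (n : ℤ) ∣ (r : ℤ) - v' := by
        rw [show (r : ℤ) - v' = -((v' : ℤ) - r) by ring]; exact dvd_neg.mpr hdvd'
      have := Int.le_of_dvd h1 h3
      omega
    have hdvdn : n ∣ v - r := by
      have hc : ((v - r : ℕ) : ℤ) = (v : ℤ) - r := by push_cast [hrv]; ring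
      exact_mod_cast (hc ▸ hdvd : (n : ℤ) ∣ ((v - r : ℕ) : ℤ))
    have hdvdn' : n ∣ v' - r := by
      have hc : ((v' - r : ℕ) : ℤ) = (v' : ℤ) - r := by push_cast [hrv']; ring
      exact_mod_cast (hc ▸ hdvd' : (n : ℤ) ∣ ((v' - r : ℕ) : ℤ))
    have hveq : v = v' := by
      have h1 := Nat.mul_div_cancel' hdvdn
      have h2 := Nat.mul_div_cancel' hdvdn'
      have h3 : (v - r) / n = (v' - r) / n := heqm
      have h4 : v - r = v' - r := by rw [← h1, ← h2, h3]
      omega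
    -- windows
    have hejd : ej < (d j : ℤ) := hcond
    have hejd' : ej' < (d j' : ℤ) := hcond'
    have hw1 : F j ≤ v := by omega
    have hw2 : v < F (j + 1) := by rw [hFsucc]; omega
    have hw3 : F j' ≤ v := by omega
    have hw4 : v < F (j' + 1) := by rw [hveq, hFsucc]; omega
    exact window_unique hmono hw1 hw2 hw3 hw4
  · -- surjective
    intro m hm
    simp only [Finset.mem_filter, Finset.mem_range] at hm
    obtain ⟨hmH, hmlt⟩ := hm
    set v : ℕ := r + n * m with hv
    obtain ⟨j, hjK, hw1, hw2⟩ := exists_window F hF0 K v hmlt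
    rw [hFsucc] at hw2
    have hwd : v - F j < d j := by omega
    have hdj : d j ≤ n := hd j hjK
    have hemod : ((r : ℤ) - (F j : ℤ)) % (n : ℤ) = ((v - F j : ℕ) : ℤ) := by
      have h1 : ((r : ℤ) - (F j : ℤ)) % (n : ℤ) = (((v - F j : ℕ) : ℤ)) % (n : ℤ) := by
        apply Int.ModEq.eq
        have hc : ((v - F j : ℕ) : ℤ) = (v : ℤ) - F j := by push_cast [hw1]; ring
        rw [hc]
        have : (r : ℤ) - F j - ((v : ℤ) - F j) = -(n * m) := by push_cast [hv]; ring
        exact Int.ModEq.symm (Int.modEq_iff_dvd.mpr (by rw [show (r:ℤ) - ↑(F j) - ((v:ℤ) - ↑(F j)) = -(↑n * ↑m) from this]; exact ⟨-m, by ring⟩))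
      rw [h1]
      apply Int.emod_eq_of_lt (by positivity)
      have : v - F j < n := by omega
      exact_mod_cast this
    refine ⟨j, ?_, ?_⟩
    · simp only [Finset.mem_filter, Finset.mem_range]
      refine ⟨hjK, ?_⟩
      rw [hemod]
      exact_mod_cast hwd
    · rw [hemod]
      have h1 : (((v - F j : ℕ) : ℤ)).toNat = v - F j := by simp
      rw [h1]
      have h2 : F j + (v - F j) - r = n * m := by omega
      rw [h2, Nat.mul_div_cancel_left _ hn]

lemma sum_range_getD (f : List ℕ → ℕ) :
    ∀ (L : List (List ℕ)), ∑ j ∈ Finset.range L.length, f (L.getD j []) = (L.map f).sum := by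
  intro L
  induction L with
  | nil => simp
  | cons a L ih =>
    rw [List.length_cons, Finset.sum_range_succ', List.map_cons, List.sum_cons, ← ih]
    simp [add_comm]


/-- **per-size load balance.**  Let `R` contain one
representative of each `≈`-class of size-`s` increment arrays, and let `L`
enumerate (in a fixed order, without repetition) the periodic ones.  Under
the rotated designation scheme, each agent `x ∈ {1,…,n}` receives
`|CV_x^s| = |A(n,s)| + #{j : (x-1-h_j) mod n < d_j}` coalitions of size `s`,
and `⌊C(n,s)/n⌋ ≤ |CV_x^s| ≤ ⌈C(n,s)/n⌉`; in particular the per-size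
allocations of any two agents differ by at most 1. -/
theorem stmt15 (n s : ℕ) (hn : 1 ≤ n) (hs1 : 1 ≤ s) (hsn : s ≤ n)
    (R : Finset (List ℕ))
    (hIA : ∀ t ∈ R, IsIA n s t)
    (hdistinct : ∀ t ∈ R, ∀ u ∈ R, ShiftEquiv t u → t = u)
    (hcomplete : ∀ u, IsIA n s u → ∃ t ∈ R, ShiftEquiv t u)
    (L : List (List ℕ)) (hnd : L.Nodup)
    (hLmem : L.toFinset = R.filter (fun t => period t < s)) :
    ∀ x ∈ Finset.Icc 1 n,
      Nat.choose n s / n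
          ≤ (R.filter (fun t => period t = s)).card + desigCount n s L x ∧
      (R.filter (fun t => period t = s)).card + desigCount n s L x
          ≤ (Nat.choose n s + n - 1) / n ∧
      ∀ y ∈ Finset.Icc 1 n,
        (R.filter (fun t => period t = s)).card + desigCount n s L x
          ≤ ((R.filter (fun t => period t = s)).card + desigCount n s L y)
              + 1 := by
  have hn0 : 0 < n := by omega
  set A := (R.filter (fun t => period t = s)).card with hA
  set d : ℕ → ℕ := fun j => stride n s (L.getD j []) with hd
  set K := L.length with hK
  set H := ∑ i ∈ Finset.range K, d i with hH
  have hdle : ∀ j, j < K → d j ≤ n := by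
    intro j hj
    have h1 : L.getD j [] = L[j] := List.getD_eq_getElem L [] hj
    have h2 : L[j] ∈ L.toFinset := List.mem_toFinset.mpr (List.getElem_mem hj)
    rw [hLmem, Finset.mem_filter] at h2
    show stride n s (L.getD j []) ≤ n
    rw [h1]
    exact stride_le hs1 hsn (hIA _ h2.1)
  have hdcAll : ∀ z, 1 ≤ z → z ≤ n → desigCount n s L z = (H + n - 1 - (z - 1)) / n := by
    intro z hz1 hzn
    have hr : z - 1 < n := by omega
    have hcast : ((z : ℤ) - 1) = (((z - 1 : ℕ)) : ℤ) := by
      rw [Nat.cast_sub hz1]; push_cast; ring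
    unfold desigCount
    simp only [offsetAt, hcast]
    exact desig_card_gen hn0 d K hdle (z - 1) hr
  -- total sum over periodic representatives equals H
  have hHsum : ∑ t ∈ R.filter (fun t => period t < s), stride n s t = H := by
    rw [← hLmem, List.sum_toFinset _ hnd, hH, hK]
    exact (sum_range_getD (stride n s) L).symm
  -- the grand total
  have hperle : ∀ t ∈ R, period t ≤ s := by
    intro t ht
    have hlen := (hIA t ht).1
    have htne : t ≠ [] := ne_nil_of_mem hs1 hIA ht
    have := period_dvd_length htne
    rw [hlen] at this
    exact Nat.le_of_dvd (by omega) this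
  have hsplit : n.choose s = n * A + H := by
    rw [choose_eq_sum_stride n s hn hs1 hsn R hIA hdistinct hcomplete,
      ← Finset.sum_filter_add_sum_filter_not R (fun t => period t = s)]
    congr 1
    · have h1 : ∀ t ∈ R.filter (fun t => period t = s), stride n s t = n := by
        intro t ht
        rw [Finset.mem_filter] at ht
        have := stride_mul hs1 hsn (hIA t ht.1)
        rw [ht.2] at this
        have hkey : s * stride n s t = s * n := by rw [this]; ring
        exact Nat.eq_of_mul_eq_mul_left (by omega) hkey
      rw [Finset.sum_congr rfl h1, Finset.sum_const, smul_eq_mul, hA, mul_comm]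
    · rw [← hHsum]
      apply Finset.sum_congr _ (fun _ _ => rfl)
      apply Finset.filter_congr
      intro t ht
      have := hperle t ht
      constructor
      · intro h; omega
      · intro h; omega
  have e1 : n.choose s / n = A + H / n := by
    rw [hsplit, Nat.mul_add_div hn0]
  have e2 : (n.choose s + n - 1) / n = A + (H + n - 1) / n := by
    rw [hsplit, show n * A + H + n - 1 = n * A + (H + n - 1) by omega, Nat.mul_add_div hn0]
  intro x hx
  rw [Finset.mem_Icc] at hx
  rw [hdcAll x hx.1 hx.2]
  refine ⟨?_, ?_, ?_⟩
  · rw [e1]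
    have : H / n ≤ (H + n - 1 - (x - 1)) / n := Nat.div_le_div_right (by omega)
    omega
  · rw [e2]
    have : (H + n - 1 - (x - 1)) / n ≤ (H + n - 1) / n := Nat.div_le_div_right (by omega)
    omega
  · intro y hy
    rw [Finset.mem_Icc] at hy
    rw [hdcAll y hy.1 hy.2]
    have h1 : (H + n - 1 - (x - 1)) / n ≤ (H + n - 1) / n := Nat.div_le_div_right (by omega)
    have h2 : (H + n - 1) / n ≤ ((H + n - 1 - (y - 1)) + n) / n := Nat.div_le_div_right (by omega)
    have h3 : ((H + n - 1 - (y - 1)) + n) / n = (H + n - 1 - (y - 1)) / n + 1 :=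
      Nat.add_div_right _ hn0
    omega


end NDCA
end

section
/- Let t be a periodic increment array of size s with period π(t) < s and stride d = n·π(t)/s (a divisor of n), and let W be any set of d agents with consecutive identifiers modulo n. Then the map x ↦ C(x, t) restricted to W is injective, and its image is exactly the set of all distinct coalitions generated by t, i.e., { C(x, t) : x ∈ W } = ⋃_{i=1}^{n} {C(i, t)}, a set of exactly d coalitions. Hence every distinct coalition generated by t is computed by exactly one agent of W. -/
namespace NDCA

def Phi (t : List ℕ) (k : ℕ) : ℕ := (t.take k).sum + k
def Tf (t : List ℕ) (k : ℕ) : ℕ := t.getD (k % t.length) 0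
def Psi (n : ℕ) (t : List ℕ) (k : ℕ) : ℕ := Phi t (k % t.length) + n * (k / t.length)

lemma sum_take_le (t : List ℕ) (j : ℕ) : (t.take j).sum ≤ t.sum := by
  calc (t.take j).sum ≤ (t.take j).sum + (t.drop j).sum := Nat.le_add_right _ _
    _ = t.sum := by rw [← List.sum_append, List.take_append_drop]

lemma flatten_replicate_getD (l : List ℕ) : ∀ (r k : ℕ), k < r * l.length →
    ((List.replicate r l).flatten).getD k 0 = l.getD (k % l.length) 0 := by
  intro r
  induction r with
  | zero => intro k hk; omega
  | succ r ih =>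
    intro k hk
    have hl : 0 < l.length := by by_contra h; simp at h; simp [h] at hk
    rw [List.replicate_succ, List.flatten_cons]
    by_cases hkl : k < l.length
    · rw [List.getD_append _ _ _ _ hkl, Nat.mod_eq_of_lt hkl]
    · push_neg at hkl
      rw [List.getD_append_right _ _ _ _ hkl]
      have h2 : k - l.length < r * l.length := by
        have : (r+1) * l.length = r * l.length + l.length := by ring
        omega
      rw [ih _ h2]
      have hke : k = (k - l.length) + l.length := by omega
      congr 1
      conv_rhs => rw [hke]
      rw [Nat.add_mod_right]

lemma rep_of_per (g : ℕ) (hg : 0 < g) : ∀ (r : ℕ) (l : List ℕ),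
    l.length = r * g →
    (∀ k, k + g < l.length → l.getD (k + g) 0 = l.getD k 0) →
    l = (List.replicate r (l.take g)).flatten := by
  intro r
  induction r with
  | zero =>
    intro l hlen _
    simp at hlen ⊢
    exact hlen
  | succ r ih =>
    intro l hlen hper
    rw [List.replicate_succ, List.flatten_cons]
    by_cases hr : r = 0
    · subst hr
      simp at hlen ⊢
      exact le_of_eq hlen
    · have hr1 : 1 ≤ r := Nat.one_le_iff_ne_zero.2 hr
      have hgg : 2 * g ≤ (r + 1) * g := by nlinarith
      have hgl : g ≤ l.length := by omega
      have hdlen : (l.drop g).length = r * g := by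
        have : (r+1) * g = r * g + g := by ring
        simp; omega
      have hdper : ∀ k, k + g < (l.drop g).length → (l.drop g).getD (k + g) 0 = (l.drop g).getD k 0 := by
        intro k hk
        have h1 : k + g + g < l.length := by simp at hk; omega
        rw [List.getD_eq_getElem _ _ (by simp; omega), List.getD_eq_getElem _ _ (by simp; omega)]
        rw [List.getElem_drop, List.getElem_drop]
        rw [← List.getD_eq_getElem _ 0 (by omega : g + (k + g) < l.length),
            ← List.getD_eq_getElem _ 0 (by omega : g + k < l.length)]
        have := hper (g + k) (by omega)
        rw [show g + k + g = g + (k+g) by ring] at this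
        exact this
      have hdtake : (l.drop g).take g = l.take g := by
        apply List.ext_getElem
        · simp; omega
        · intro i h1 h2
          simp at h1 h2
          have hi : i < g := by omega
          have e : l.getD (g + i) 0 = l.getD i 0 := by
            have := hper i (by omega)
            rwa [Nat.add_comm] at this
          rw [List.getElem_take, List.getElem_take, List.getElem_drop]
          have e2 : l[g+i]'(by omega) = l[i]'(by omega) := by
            rw [← List.getD_eq_getElem l 0, ← List.getD_eq_getElem l 0]
            exact e
          exact e2
      have := ih (l.drop g) hdlen hdper
      rw [hdtake] at this
      conv_lhs => rw [← List.take_append_drop g l, this]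


lemma shift_of_mem (Psi : ℕ → ℕ) (hmono : StrictMono Psi) (c m : ℕ)
    (hm : Psi m = c)
    (hS : ∀ x, (∃ k, Psi k = x) ↔ (∃ k, Psi k = x + c)) :
    ∀ k, Psi (k + m) = Psi k + c := by
  intro k
  induction k using Nat.strong_induction_on with
  | _ k ih =>
    obtain ⟨l, hl⟩ := (hS (Psi k)).1 ⟨k, rfl⟩
    rcases lt_trichotomy l (k + m) with h | h | h
    · -- l < k + m
      have hlm : m ≤ l := by
        by_contra hc
        push_neg at hc
        have := hmono hc
        omega
      have hj : l - m < k := by omega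
      have := ih (l - m) hj
      rw [show l - m + m = l by omega] at this
      rw [this] at hl
      have : Psi (l - m) = Psi k := by omega
      have := hmono.injective this
      omega
    · rw [h] at hl; omega
    · -- k + m < l
      exfalso
      have h1 : Psi (k + m) < Psi l := hmono h
      have h2 : c ≤ Psi (k + m) := by
        rw [← hm]
        exact hmono.monotone (by omega)
      obtain ⟨j, hj⟩ := (hS (Psi (k + m) - c)).2 ⟨k + m, by omega⟩
      have hjk : Psi j < Psi k := by omega
      have hjk' : j < k := by
        by_contra hc
        push_neg at hc
        exact absurd (hmono.monotone hc) (by omega)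
      have := ih j hjk'
      have : Psi (j + m) = Psi (k + m) := by omega
      have := hmono.injective this
      omega

lemma period_gcd (f : ℕ → ℕ) : ∀ (a b : ℕ), (∀ k, f (k + a) = f k) →
    (∀ k, f (k + b) = f k) → (∀ k, f (k + Nat.gcd a b) = f k) := by
  have hmul : ∀ (b : ℕ), (∀ k, f (k + b) = f k) → ∀ (j k : ℕ), f (k + b * j) = f k := by
    intro b hb j
    induction j with
    | zero => simp
    | succ j ih =>
      intro k
      rw [Nat.mul_succ, ← Nat.add_assoc, hb, ih]
  have hmod : ∀ (a b : ℕ), (∀ k, f (k + a) = f k) → (∀ k, f (k + b) = f k) →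
      ∀ k, f (k + b % a) = f k := by
    intro a b ha hb k
    have : k + b = (k + b % a) + a * (b / a) := by
      have := Nat.mod_add_div b a
      omega
    have h1 := hmul a ha (b / a) (k + b % a)
    rw [← this, hb] at h1
    exact h1.symm
  intro a b
  induction a, b using Nat.gcd.induction with
  | H0 b => intro _ hb; simpa using hb
  | H1 a b ha ih =>
    intro h1 h2
    rw [Nat.gcd_rec]
    exact ih (hmod a b h1 h2) h1


lemma Phi_succ (t : List ℕ) (j : ℕ) (hj : j < t.length) :
    Phi t (j + 1) = Phi t j + t.getD j 0 + 1 := by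
  unfold Phi
  rw [List.take_succ, List.sum_append]
  rw [List.getElem?_eq_getElem hj]
  rw [List.getD_eq_getElem _ _ hj]
  simp
  ring

lemma Phi_zero (t : List ℕ) : Phi t 0 = 0 := by simp [Phi]

lemma Phi_length (n : ℕ) (t : List ℕ) (hsn : t.length ≤ n) (hsum : t.sum = n - t.length) :
    Phi t t.length = n := by
  unfold Phi
  rw [List.take_length]
  omega

lemma Phi_lt (n : ℕ) (t : List ℕ) (hsn : t.length ≤ n) (hsum : t.sum = n - t.length)
    (j : ℕ) (hj : j < t.length) : Phi t j < n := by
  have := sum_take_le t j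
  unfold Phi
  omega

lemma Psi_succ (n : ℕ) (t : List ℕ) (hs1 : 1 ≤ t.length) (hsn : t.length ≤ n)
    (hsum : t.sum = n - t.length) (k : ℕ) :
    Psi n t (k + 1) = Psi n t k + Tf t k + 1 := by
  set s := t.length with hs
  have hks : k % s < s := Nat.mod_lt _ (by omega)
  by_cases hc : k % s + 1 < s
  · have h1 : (k + 1) % s = k % s + 1 := by
      conv_lhs => rw [Nat.add_mod]
      rw [Nat.one_mod_eq_one.mpr (by omega), Nat.mod_eq_of_lt hc]
    have h2 : (k + 1) / s = k / s := by
      rw [Nat.succ_div]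
      have hnd : ¬ (s ∣ k + 1) := by
        intro hdvd
        have := Nat.mod_eq_zero_of_dvd hdvd
        omega
      simp [hnd]
    unfold Psi Tf
    rw [h1, h2, ← hs, Phi_succ t (k % s) hks]
    ring
  · have hke : k % s = s - 1 := by omega
    have h1 : (k + 1) % s = 0 := by
      rcases Nat.lt_or_ge 1 s with hs2 | hs2
      · rw [Nat.add_mod, Nat.one_mod_eq_one.mpr (by omega),
          show k % s + 1 = s by omega, Nat.mod_self]
      · have : s = 1 := by omega
        simp [this, Nat.mod_one]
    have h2 : (k + 1) / s = k / s + 1 := by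
      rw [Nat.succ_div]
      have hdvd : s ∣ k + 1 := Nat.dvd_of_mod_eq_zero h1
      simp [hdvd]
    unfold Psi Tf
    rw [h1, h2, ← hs, Phi_zero, hke]
    have hPs : Phi t (s - 1) + t.getD (s-1) 0 + 1 = n := by
      have h3 := Phi_succ t (s - 1) (by omega)
      rw [show s - 1 + 1 = s by omega] at h3
      rw [← h3]
      exact Phi_length n t hsn hsum
    have : n * (k / s + 1) = n * (k / s) + n := by ring
    linarith [hPs]

lemma Psi_mono (n : ℕ) (t : List ℕ) (hs1 : 1 ≤ t.length) (hsn : t.length ≤ n)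
    (hsum : t.sum = n - t.length) : StrictMono (Psi n t) := by
  apply strictMono_nat_of_lt_succ
  intro k
  rw [Psi_succ n t hs1 hsn hsum k]
  omega

lemma Psi_zero (n : ℕ) (t : List ℕ) (hs1 : 1 ≤ t.length) : Psi n t 0 = 0 := by
  unfold Psi
  rw [Nat.zero_mod, Nat.zero_div, Phi_zero]
  simp

lemma Psi_add_len (n : ℕ) (t : List ℕ) (hs1 : 1 ≤ t.length) (k : ℕ) :
    Psi n t (k + t.length) = Psi n t k + n := by
  unfold Psi
  rw [Nat.add_mod_right, Nat.add_div_right _ (by omega)]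
  ring


lemma Psi_small (n : ℕ) (t : List ℕ) (j : ℕ) (hj : j < t.length) : Psi n t j = Phi t j := by
  unfold Psi
  rw [Nat.mod_eq_of_lt hj, Nat.div_eq_of_lt hj]
  simp

lemma getD_period_of_rep (t : List ℕ) (q : ℕ) (h0 : 0 < t.length) (hq : IsPeriodOf t q) :
    ∀ k, k < t.length → t.getD k 0 = t.getD (k % q) 0 := by
  obtain ⟨hq1, hqd, hrep⟩ := hq
  have hql : q ≤ t.length := Nat.le_of_dvd h0 hqd
  have htl : (t.take q).length = q := by simp [hql]
  intro k hk
  have hb : k < (t.length / q) * (t.take q).length := by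
    rw [htl, Nat.div_mul_cancel hqd]; exact hk
  conv_lhs => rw [hrep]
  rw [flatten_replicate_getD _ _ _ hb, htl]
  have hkq : k % q < q := Nat.mod_lt _ (by omega)
  rw [List.getD_eq_getElem _ _ (by rw [htl]; exact hkq), List.getElem_take,
    ← List.getD_eq_getElem _ 0 (by omega)]

lemma Tf_period (t : List ℕ) (q : ℕ) (h0 : 0 < t.length) (hq : IsPeriodOf t q) :
    ∀ k, Tf t (k + q) = Tf t k := by
  intro k
  have hqd := hq.2.1
  unfold Tf
  rw [getD_period_of_rep t q h0 hq _ (Nat.mod_lt _ (by omega)),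
      getD_period_of_rep t q h0 hq _ (Nat.mod_lt _ (by omega)),
      Nat.mod_mod_of_dvd _ hqd, Nat.mod_mod_of_dvd _ hqd, Nat.add_mod_right]

lemma Psi_add_p (n : ℕ) (t : List ℕ) (p : ℕ) (hs1 : 1 ≤ t.length) (hsn : t.length ≤ n)
    (hsum : t.sum = n - t.length) (hq : IsPeriodOf t p) (hpls : p < t.length) :
    ∀ k, Psi n t (k + p) = Psi n t k + Phi t p := by
  intro k
  induction k with
  | zero =>
    rw [Nat.zero_add, Psi_zero n t hs1]
    unfold Psi
    rw [Nat.mod_eq_of_lt hpls, Nat.div_eq_of_lt hpls]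
    simp
  | succ k ih =>
    have h1 : k + 1 + p = (k + p) + 1 := by ring
    rw [h1, Psi_succ n t hs1 hsn hsum (k + p), ih,
        Tf_period t p (by omega) hq k, Psi_succ n t hs1 hsn hsum k]
    ring

lemma n_mul_p (n : ℕ) (t : List ℕ) (p : ℕ) (hsn : t.length ≤ n)
    (hsum : t.sum = n - t.length) (hq : IsPeriodOf t p) :
    n * p = t.length * Phi t p := by
  obtain ⟨hq1, hqd, hrep⟩ := hq
  have h1 : t.sum = (t.length / p) * (t.take p).sum := by
    conv_lhs => rw [hrep]
    rw [List.sum_flatten, List.map_replicate, List.sum_replicate, smul_eq_mul]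
  have h2 : (t.length / p) * p = t.length := Nat.div_mul_cancel hqd
  have h3 : t.sum + t.length = n := by omega
  have hPhi : Phi t p = (t.take p).sum + p := rfl
  calc n * p = (t.sum + t.length) * p := by rw [h3]
    _ = ((t.length / p) * (t.take p).sum + t.length) * p := by rw [← h1]
    _ = (t.length / p) * p * (t.take p).sum + t.length * p := by ring
    _ = t.length * (t.take p).sum + t.length * p := by rw [h2]
    _ = t.length * ((t.take p).sum + p) := by ring
    _ = t.length * Phi t p := by rw [hPhi]

lemma SP_iff (n : ℕ) (t : List ℕ) (hn : 1 ≤ n) (hs1 : 1 ≤ t.length) (hsn : t.length ≤ n)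
    (hsum : t.sum = n - t.length) (x : ℕ) :
    (∃ k, Psi n t k = x) ↔ ∃ j, j < t.length ∧ x % n = Phi t j := by
  constructor
  · rintro ⟨k, rfl⟩
    refine ⟨k % t.length, Nat.mod_lt _ (by omega), ?_⟩
    unfold Psi
    rw [Nat.add_mul_mod_self_left]
    exact Nat.mod_eq_of_lt (Phi_lt n t hsn hsum _ (Nat.mod_lt _ (by omega)))
  · rintro ⟨j, hj, hx⟩
    refine ⟨j + t.length * (x / n), ?_⟩
    unfold Psi
    have h1 : (j + t.length * (x / n)) % t.length = j := by
      rw [Nat.add_mul_mod_self_left, Nat.mod_eq_of_lt hj]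
    have h2 : (j + t.length * (x / n)) / t.length = x / n := by
      rw [Nat.add_mul_div_left _ _ (by omega : 0 < t.length), Nat.div_eq_of_lt hj, Nat.zero_add]
    rw [h1, h2, ← hx]
    exact Nat.mod_add_div x n

lemma coal_eq_image (n a : ℕ) (t : List ℕ) :
    coal n (a + 1) t = (Finset.range t.length).image (fun j => (a + Phi t j) % n + 1) := by
  unfold coal
  ext y
  simp only [Finset.mem_image, Finset.mem_Icc, Finset.mem_range]
  constructor
  · rintro ⟨i, ⟨h1, h2⟩, he⟩
    exact ⟨i - 1, by omega, he⟩
  · rintro ⟨j, hj, he⟩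
    exact ⟨j + 1, ⟨by omega, by omega⟩, he⟩


lemma main (n s : ℕ) (hn : 1 ≤ n) (hs1 : 1 ≤ s) (hsn : s ≤ n)
    (t : List ℕ) (ht : IsIA n s t) (hper : period t < s) :
    (n * period t / s ∣ n) ∧ 0 < n * period t / s ∧
      ∀ a b : ℕ, (coal n (a + 1) t = coal n (b + 1) t ↔
        a % (n * period t / s) = b % (n * period t / s)) := by
  obtain ⟨hlen, hsum⟩ := ht
  subst hlen
  have hsper : IsPeriodOf t t.length := by
    refine ⟨hs1, dvd_rfl, ?_⟩
    rw [Nat.div_self (by omega : 0 < t.length)]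
    simp
  have hpmem : IsPeriodOf t (period t) := Nat.sInf_mem (s := {p | IsPeriodOf t p}) ⟨_, hsper⟩
  set p := period t with hpdef
  have hp1 : 1 ≤ p := hpmem.1
  have hpls : p < t.length := hper
  set D := Phi t p with hDdef
  have hnp : n * p = t.length * D := n_mul_p n t p hsn hsum hpmem
  have hDdiv : n * p / t.length = D := by
    rw [hnp]; exact Nat.mul_div_cancel_left _ (by omega)
  have hD1 : 1 ≤ D := by
    have : D = (t.take p).sum + p := rfl
    omega
  have hsp : (t.length / p) * p = t.length := Nat.div_mul_cancel hpmem.2.1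
  have hnD : n = D * (t.length / p) := by
    have h1 := hnp
    have h2 : t.length * D = (D * (t.length / p)) * p := by
      conv_lhs => rw [← hsp]
      ring
    rw [h2] at h1
    exact Nat.eq_of_mul_eq_mul_right (by omega) h1
  have hdvdn : D ∣ n := ⟨_, hnD⟩
  rw [hDdiv]
  refine ⟨hdvdn, by omega, ?_⟩
  -- the step lemma
  have hPsiP := Psi_add_p n t p hs1 hsn hsum hpmem hpls
  rw [← hDdef] at hPsiP
  have hstep : ∀ x, coal n (x + 1) t = coal n (x + D + 1) t := by
    intro x
    rw [coal_eq_image, coal_eq_image]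
    ext y
    simp only [Finset.mem_image, Finset.mem_range]
    constructor
    · rintro ⟨j, hj, rfl⟩
      by_cases hc : p ≤ j
      · refine ⟨j - p, by omega, ?_⟩
        have h1 := hPsiP (j - p)
        rw [show j - p + p = j by omega] at h1
        rw [Psi_small n t j hj, Psi_small n t (j - p) (by omega)] at h1
        rw [show x + D + Phi t (j - p) = x + Phi t j by omega]
      · refine ⟨j + t.length - p, by omega, ?_⟩
        have h1 := hPsiP (j + t.length - p)
        rw [show j + t.length - p + p = j + t.length by omega, Psi_add_len n t hs1 j] at h1
        rw [Psi_small n t j hj, Psi_small n t (j + t.length - p) (by omega)] at h1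
        rw [show x + D + Phi t (j + t.length - p) = x + Phi t j + n by omega, Nat.add_mod_right]
    · rintro ⟨j, hj, rfl⟩
      by_cases hc : j + p < t.length
      · refine ⟨j + p, hc, ?_⟩
        have h1 := hPsiP j
        rw [Psi_small n t j hj, Psi_small n t (j + p) hc] at h1
        rw [show x + Phi t (j + p) = x + D + Phi t j by omega]
      · refine ⟨j + p - t.length, by omega, ?_⟩
        have h1 := hPsiP j
        rw [show j + p = (j + p - t.length) + t.length by omega, Psi_add_len n t hs1] at h1
        rw [Psi_small n t j hj, Psi_small n t (j + p - t.length) (by omega)] at h1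
        rw [show x + D + Phi t j = x + Phi t (j + p - t.length) + n by omega, Nat.add_mod_right]
  have hmulstep : ∀ x q, coal n (x + 1) t = coal n (x + D * q + 1) t := by
    intro x q
    induction q with
    | zero => simp
    | succ q ih =>
      rw [ih]
      have h2 := hstep (x + D * q)
      rw [show x + D * q + D = x + D * (q + 1) by ring] at h2
      exact h2
  intro a b
  constructor
  · -- hard direction
    intro hcoal
    have H1 : ∀ j, j < t.length → ∃ j', j' < t.length ∧
        (a + Phi t j) % n = (b + Phi t j') % n := by
      intro j hj
      have hy : (a + Phi t j) % n + 1 ∈ coal n (b + 1) t := by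
        rw [← hcoal, coal_eq_image]
        exact Finset.mem_image.2 ⟨j, Finset.mem_range.2 hj, rfl⟩
      rw [coal_eq_image] at hy
      obtain ⟨j', hj', he⟩ := Finset.mem_image.1 hy
      exact ⟨j', Finset.mem_range.1 hj', by omega⟩
    have H2 : ∀ j, j < t.length → ∃ j', j' < t.length ∧
        (b + Phi t j) % n = (a + Phi t j') % n := by
      intro j hj
      have hy : (b + Phi t j) % n + 1 ∈ coal n (a + 1) t := by
        rw [hcoal, coal_eq_image]
        exact Finset.mem_image.2 ⟨j, Finset.mem_range.2 hj, rfl⟩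
      rw [coal_eq_image] at hy
      obtain ⟨j', hj', he⟩ := Finset.mem_image.1 hy
      exact ⟨j', Finset.mem_range.1 hj', by omega⟩
    set c := (b + (n - a % n)) % n with hcdef
    have hcn : c < n := Nat.mod_lt _ (by omega)
    have hab : (a + c) % n = b % n := by
      have h1 : (a + c) % n = (a + (b + (n - a % n))) % n := by
        rw [hcdef, Nat.add_mod_mod]
      have h4 := Nat.mod_add_div a n
      have h5 : a % n < n := Nat.mod_lt _ (by omega)
      have h2 : a + (b + (n - a % n)) = b + n * (a / n) + n := by omega
      rw [h1, h2, Nat.add_mod_right, Nat.add_mul_mod_self_left]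
    by_cases hc0 : c = 0
    · rw [hc0, Nat.add_zero] at hab
      exact Nat.ModEq.of_dvd hdvdn hab
    · have hSiff : ∀ x, (∃ k, Psi n t k = x) ↔ (∃ k, Psi n t k = x + c) := by
        intro x
        rw [SP_iff n t (by omega) hs1 hsn hsum, SP_iff n t (by omega) hs1 hsn hsum]
        constructor
        · rintro ⟨j, hj, hx⟩
          obtain ⟨j', hj', he⟩ := H2 j hj
          refine ⟨j', hj', ?_⟩
          have m1 : (a + c + Phi t j) % n = (b + Phi t j) % n := by
            have hmeq : Nat.ModEq n (a + c) b := hab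
            exact hmeq.add_right _
          have m2 : (a + (Phi t j + c)) % n = (a + Phi t j') % n := by
            rw [show a + (Phi t j + c) = a + c + Phi t j by ring, m1, he]
          have m3 : (Phi t j + c) % n = Phi t j' % n := Nat.ModEq.add_left_cancel' a m2
          have m4 : (x + c) % n = (Phi t j + c) % n := by
            rw [Nat.add_mod, Nat.mod_eq_of_lt hcn, hx]
          rw [m4, m3, Nat.mod_eq_of_lt (Phi_lt n t hsn hsum j' hj')]
        · rintro ⟨j', hj', hx⟩
          obtain ⟨j, hj, he⟩ := H1 j' hj'
          refine ⟨j, hj, ?_⟩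
          have m1 : (b + Phi t j) % n = (a + c + Phi t j) % n := by
            have hmeq : Nat.ModEq n b (a + c) := hab.symm
            exact hmeq.add_right _
          have m2 : (a + Phi t j') % n = (a + (Phi t j + c)) % n := by
            rw [he, m1]
            congr 1
            ring
          have m3 : Phi t j' % n = (Phi t j + c) % n := Nat.ModEq.add_left_cancel' a m2
          have m4 : (x + c) % n = (Phi t j + c) % n := by
            rw [hx, ← m3, Nat.mod_eq_of_lt (Phi_lt n t hsn hsum j' hj')]
          have m5 : x % n = Phi t j % n := Nat.ModEq.add_right_cancel' c m4
          rw [m5, Nat.mod_eq_of_lt (Phi_lt n t hsn hsum j hj)]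
      have hc_mem : ∃ k, Psi n t k = c := by
        have h0 : ∃ k, Psi n t k = 0 := ⟨0, Psi_zero n t hs1⟩
        have h2 := (hSiff 0).1 h0
        simpa using h2
      obtain ⟨m, hm⟩ := hc_mem
      have hmono := Psi_mono n t hs1 hsn hsum
      have hshift := shift_of_mem (Psi n t) hmono c m hm hSiff
      have hTm : ∀ k, Tf t (k + m) = Tf t k := by
        intro k
        have e1 := hshift (k + 1)
        have e2 := hshift k
        have e3 := Psi_succ n t hs1 hsn hsum (k + m)
        have e4 := Psi_succ n t hs1 hsn hsum k
        rw [show k + 1 + m = (k + m) + 1 by ring] at e1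
        omega
      have hTs : ∀ k, Tf t (k + t.length) = Tf t k := Tf_period t t.length (by omega) hsper
      have hTp : ∀ k, Tf t (k + p) = Tf t k := Tf_period t p (by omega) hpmem
      have hTg := period_gcd (Tf t) m t.length hTm hTs
      have hrep_of : ∀ (g : ℕ), 0 < g → g ∣ t.length → (∀ k, Tf t (k + g) = Tf t k) →
          IsPeriodOf t g := by
        intro g hg hgd hTper
        refine ⟨hg, hgd, ?_⟩
        apply rep_of_per g hg (t.length / g) t (Nat.div_mul_cancel hgd).symm
        intro k hk
        have h1 := hTper k
        unfold Tf at h1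
        rw [Nat.mod_eq_of_lt hk, Nat.mod_eq_of_lt (by omega)] at h1
        exact h1
      have hgper : IsPeriodOf t (Nat.gcd m t.length) :=
        hrep_of _ (Nat.gcd_pos_of_pos_right _ (by omega)) (Nat.gcd_dvd_right _ _) hTg
      have hTg' := period_gcd (Tf t) p (Nat.gcd m t.length) hTp hTg
      have hg'per : IsPeriodOf t (Nat.gcd p (Nat.gcd m t.length)) :=
        hrep_of _ (Nat.gcd_pos_of_pos_left _ (by omega))
          (dvd_trans (Nat.gcd_dvd_left _ _) hpmem.2.1) hTg'
      have hple_g' : p ≤ Nat.gcd p (Nat.gcd m t.length) := Nat.sInf_le hg'per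
      have hg'le : Nat.gcd p (Nat.gcd m t.length) ≤ p :=
        Nat.le_of_dvd (by omega) (Nat.gcd_dvd_left _ _)
      have hg'eq : Nat.gcd p (Nat.gcd m t.length) = p := le_antisymm hg'le hple_g'
      have hpdvd_m : p ∣ m :=
        dvd_trans (hg'eq ▸ Nat.gcd_dvd_right p (Nat.gcd m t.length)) (Nat.gcd_dvd_left _ _)
      obtain ⟨q, hq⟩ := hpdvd_m
      have hDm : ∀ j, Psi n t (p * j) = D * j := by
        intro j
        induction j with
        | zero => simpa using Psi_zero n t hs1
        | succ j ih =>
          rw [Nat.mul_succ, hPsiP (p * j), ih]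
          ring
      have hcD : c = D * q := by rw [← hm, hq, hDm q]
      have habD : (a + c) % D = b % D := Nat.ModEq.of_dvd hdvdn hab
      have hac : (a + c) % D = a % D := by rw [hcD, Nat.add_mul_mod_self_left]
      rw [← hac]
      exact habD
  · -- easy direction
    intro hmod
    rcases le_total a b with hle | hle
    · obtain ⟨q, hq⟩ := (Nat.modEq_iff_dvd' hle).1 hmod
      rw [show b = a + D * q by omega]
      exact hmulstep a q
    · obtain ⟨q, hq⟩ := (Nat.modEq_iff_dvd' hle).1 hmod.symm
      rw [show a = b + D * q by omega]
      exact (hmulstep b q).symm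


/-- Let `t` be a periodic increment array of size `s`
(`π(t) < s`) with stride `d = n·π(t)/s`, and let `W` be any set of `d`
agents with consecutive identifiers modulo `n`.  Then `x ↦ C(x, t)` is
injective on `W`, its image is exactly the set of all distinct coalitions
generated by `t`, and that set has exactly `d` elements: every distinct
coalition generated by `t` is computed by exactly one agent of `W`. -/
theorem stmt19 (n s : ℕ) (hn : 1 ≤ n) (hs1 : 1 ≤ s) (hsn : s ≤ n)
    (t : List ℕ) (ht : IsIA n s t) (hper : period t < s)
    (h : ℕ) (W : Finset ℕ)
    (hW : W = (Finset.range (n * period t / s)).image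
      (fun k => (h + k) % n + 1)) :
    Set.InjOn (fun x => coal n x t) (W : Set ℕ) ∧
    W.image (fun x => coal n x t) = gen n t ∧
    (gen n t).card = n * period t / s := by
  obtain ⟨hdvd, hdpos, hkey⟩ := main n s hn hs1 hsn t ht hper
  set d := n * period t / s with hddef
  have hdn : d ≤ n := Nat.le_of_dvd (by omega) hdvd
  have hmodnd : ∀ z : ℕ, (z % n) % d = z % d := fun z => Nat.mod_mod_of_dvd z hdvd
  subst hW
  refine ⟨?_, ?_, ?_⟩
  · -- injectivity
    intro x hx y hy hxy
    obtain ⟨k, hk, rfl⟩ := Finset.mem_image.1 (Finset.mem_coe.1 hx)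
    obtain ⟨k', hk', rfl⟩ := Finset.mem_image.1 (Finset.mem_coe.1 hy)
    rw [Finset.mem_range] at hk hk'
    have hxy' : coal n ((h + k) % n + 1) t = coal n ((h + k') % n + 1) t := hxy
    have h1 := (hkey ((h + k) % n) ((h + k') % n)).1 hxy'
    rw [hmodnd, hmodnd] at h1
    have h2 : k % d = k' % d := Nat.ModEq.add_left_cancel' h h1
    rw [Nat.mod_eq_of_lt hk, Nat.mod_eq_of_lt hk'] at h2
    rw [h2]
  · -- image = gen
    apply Finset.Subset.antisymm
    · intro y hy
      obtain ⟨x, hxW, rfl⟩ := Finset.mem_image.1 hy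
      obtain ⟨k, hk, rfl⟩ := Finset.mem_image.1 hxW
      apply Finset.mem_image.2
      have hlt : (h + k) % n < n := Nat.mod_lt _ (by omega)
      exact ⟨(h + k) % n + 1, Finset.mem_Icc.2 ⟨by omega, by omega⟩, rfl⟩
    · intro y hy
      obtain ⟨x, hxI, rfl⟩ := Finset.mem_image.1 hy
      have hx1 := Finset.mem_Icc.1 hxI
      apply Finset.mem_image.2
      set a := x - 1 with hadef
      set k := (a + d - h % d) % d with hkdef
      have hkd : k < d := Nat.mod_lt _ (by omega)
      refine ⟨(h + k) % n + 1, Finset.mem_image.2 ⟨k, Finset.mem_range.2 hkd, rfl⟩, ?_⟩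
      have hxa : coal n x t = coal n (a + 1) t := by
        rw [show a + 1 = x by omega]
      rw [hxa]
      apply (hkey ((h + k) % n) a).2
      rw [hmodnd]
      have hhd : h % d < d := Nat.mod_lt _ (by omega)
      calc (h + k) % d = (h % d + k % d) % d := Nat.add_mod h k d
        _ = (h % d + (a + d - h % d) % d) % d := by rw [← hkdef, Nat.mod_eq_of_lt hkd]
        _ = (h % d + (a + d - h % d)) % d := Nat.add_mod_mod _ _ _
        _ = (a + d) % d := by rw [show h % d + (a + d - h % d) = a + d by omega]
        _ = a % d := Nat.add_mod_right a d
  · -- cardinality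
    have hgen : gen n t = (Finset.range d).image (fun r => coal n (r + 1) t) := by
      apply Finset.Subset.antisymm
      · intro y hy
        obtain ⟨x, hxI, rfl⟩ := Finset.mem_image.1 hy
        have hx1 := Finset.mem_Icc.1 hxI
        apply Finset.mem_image.2
        refine ⟨(x - 1) % d, Finset.mem_range.2 (Nat.mod_lt _ (by omega)), ?_⟩
        have hx' : coal n x t = coal n ((x - 1) + 1) t := by
          rw [show (x - 1) + 1 = x by omega]
        rw [hx']
        apply (hkey ((x - 1) % d) (x - 1)).2
        exact Nat.mod_mod_of_dvd _ dvd_rfl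
      · intro y hy
        obtain ⟨r, hr, rfl⟩ := Finset.mem_image.1 hy
        have hrd := Finset.mem_range.1 hr
        exact Finset.mem_image.2 ⟨r + 1, Finset.mem_Icc.2 ⟨by omega, by omega⟩, rfl⟩
    rw [hgen, Finset.card_image_of_injOn, Finset.card_range]
    intro r hr r' hr' hrr
    have h1 := (hkey r r').1 hrr
    rwa [Nat.mod_eq_of_lt (Finset.mem_range.1 hr), Nat.mod_eq_of_lt (Finset.mem_range.1 hr')] at h1



end NDCA
end
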